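/- Let n ≥ 1, let 𝒦 ⊆ ℝⁿ be a convex set containing the closed Euclidean ball of radius r > 0 centered at the origin, let C > 0 and let f : 𝒦 → ℝ be convex on 𝒦 with 0 ≤ f(x) ≤ C for all x ∈ 𝒦. Let 0 < ε < 1 and set 𝒦_ε = (1−ε)·𝒦 = {(1−ε)z : z ∈ 𝒦}. Then for every x ∈ 𝒦_ε and every y ∈ 𝒦, |f(x) − f(y)| ≤ (C/(rε))·‖x − y‖. -/

import Mathlib

open scoped Pointwise

/-- Part (i) of the effective-Lipschitz lemma of Flaxman, Kalai and McMahan: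
a convex function with values in `[0,C]` on `𝒦` is Lipschitz with constant
`C/(rε)` from the shrunk body `(1−ε)𝒦` to `𝒦`. -/
theorem effective_lipschitz
    (n : ℕ) (hn : 1 ≤ n) (𝒦 : Set (EuclideanSpace ℝ (Fin n)))
    (hconv : Convex ℝ 𝒦) (r : ℝ) (hr : 0 < r)
    (hball : Metric.closedBall (0 : EuclideanSpace ℝ (Fin n)) r ⊆ 𝒦)
    (C : ℝ) (hC : 0 < C)
    (f : EuclideanSpace ℝ (Fin n) → ℝ) (hf : ConvexOn ℝ 𝒦 f)
    (hf0 : ∀ x ∈ 𝒦, 0 ≤ f x) (hfC : ∀ x ∈ 𝒦, f x ≤ C)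
    (ε : ℝ) (hε0 : 0 < ε) (hε1 : ε < 1)
    (𝒦ε : Set (EuclideanSpace ℝ (Fin n))) (h𝒦ε : 𝒦ε = (1 - ε) • 𝒦) :
    ∀ x ∈ 𝒦ε, ∀ y ∈ 𝒦, |f x - f y| ≤ (C / (r * ε)) * ‖x - y‖ := by
  intro x hx y hy
  subst h𝒦ε
  obtain ⟨z₀, hz₀, rfl⟩ := hx
  beta_reduce
  set x := (1 - ε) • z₀ with hxdef
  clear_value x
  have h0 : (0 : EuclideanSpace ℝ (Fin n)) ∈ 𝒦 := hball (by simp [hr.le])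
  have h1ε : (0:ℝ) < 1 - ε := by linarith
  have hxK : x ∈ 𝒦 := by
    have := hconv hz₀ h0 h1ε.le hε0.le (by ring)
    simpa [← hxdef] using this
  set d := ‖x - y‖ with hd
  clear_value d
  have hδ0 : 0 < r * ε := mul_pos hr hε0
  by_cases hd0 : d = 0
  · have hxy : x = y := sub_eq_zero.mp (norm_eq_zero.mp (by rw [← hd]; exact hd0))
    rw [hxy]
    simp [hd0]
  · have hdnn : (0:ℝ) ≤ d := by rw [hd]; positivity
    have hdpos : 0 < d := lt_of_le_of_ne hdnn (Ne.symm hd0)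
    rcases le_or_gt (r * ε) d with hcase | hcase
    · have h1 : |f x - f y| ≤ C := by
        rw [abs_sub_le_iff]
        constructor <;> nlinarith [hf0 x hxK, hf0 y hy, hfC x hxK, hfC y hy]
      have h2 : C ≤ C / (r * ε) * d := by
        rw [div_mul_eq_mul_div, le_div_iff₀ hδ0]
        nlinarith
      calc |f x - f y| ≤ C := h1
        _ ≤ C / (r * ε) * d := h2
    · -- membership lemma
      have hmem : ∀ s : ℝ, |s| = 1 → x + ((s * (r * ε)) / d) • (x - y) ∈ 𝒦 := by
        intro s hs
        have hnorm : ‖((s * r) / d) • (x - y)‖ ≤ r := by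
          rw [norm_smul, Real.norm_eq_abs, ← hd, abs_div, abs_mul, hs, one_mul,
            abs_of_pos hr, abs_of_pos hdpos, div_mul_eq_mul_div, mul_div_assoc,
            div_self hd0, mul_one]
        have hb : ((s * r) / d) • (x - y) ∈ Metric.closedBall (0 : EuclideanSpace ℝ (Fin n)) r := by
          simpa using hnorm
        have hmem0 := hconv hz₀ (hball hb) h1ε.le hε0.le (by ring)
        have heq : (1 - ε) • z₀ + ε • (((s * r) / d) • (x - y))
            = x + ((s * (r * ε)) / d) • (x - y) := by
          rw [hxdef]
          match_scalars
          all_goals field_simp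
          all_goals try ring
          all_goals tauto
        rwa [heq] at hmem0
      have hzmem : x + ((r * ε) / d) • (x - y) ∈ 𝒦 := by
        have := hmem 1 (by norm_num)
        rwa [one_mul] at this
      have hwmem : x + (-(r * ε) / d) • (x - y) ∈ 𝒦 := by
        have := hmem (-1) (by norm_num)
        rwa [neg_one_mul] at this
      set z := x + ((r * ε) / d) • (x - y) with hz
      set w := x + (-(r * ε) / d) • (x - y) with hw
      clear_value z w
      have hsum : 0 < r * ε + d := by linarith
      -- first combination: x = (rε/(rε+d)) • y + (d/(rε+d)) • z
      have hcomb1 : ((r*ε)/(r*ε+d)) • y + (d/(r*ε+d)) • z = x := by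
        rw [hz]
        match_scalars
        all_goals field_simp
        all_goals try ring
        all_goals tauto
      have hf1 : f x ≤ ((r*ε)/(r*ε+d)) * f y + (d/(r*ε+d)) * f z := by
        have := hf.2 hy hzmem (show (0:ℝ) ≤ (r*ε)/(r*ε+d) by positivity)
          (show (0:ℝ) ≤ d/(r*ε+d) by positivity)
          (show (r*ε)/(r*ε+d) + d/(r*ε+d) = 1 by
            rw [← add_div, div_self hsum.ne'])
        rwa [hcomb1] at this
      -- second combination: y = (1 - d/(rε)) • x + (d/(rε)) • w
      have hcomb2 : (1 - d/(r*ε)) • x + (d/(r*ε)) • w = y := by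
        rw [hw]
        match_scalars
        all_goals field_simp
        all_goals try ring
        all_goals tauto
      have ht1 : d/(r*ε) ≤ 1 := by rw [div_le_one hδ0]; linarith
      have hf2 : f y ≤ (1 - d/(r*ε)) * f x + (d/(r*ε)) * f w := by
        have := hf.2 hxK hwmem (show (0:ℝ) ≤ 1 - d/(r*ε) by linarith)
          (show (0:ℝ) ≤ d/(r*ε) by positivity)
          (show 1 - d/(r*ε) + d/(r*ε) = 1 by ring)
        rwa [hcomb2] at this
      -- conclude
      have hab : (r*ε)/(r*ε+d) = 1 - d/(r*ε+d) := by field_simp; ring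
      rw [hab] at hf1
      have e1 : f x - f y ≤ (d/(r*ε+d)) * (f z - f y) := by
        have hring : (1 - d/(r*ε+d)) * f y + (d/(r*ε+d)) * f z - f y
            = (d/(r*ε+d)) * (f z - f y) := by ring
        linarith
      have e2 : (d/(r*ε+d)) * (f z - f y) ≤ (d/(r*ε+d)) * C :=
        mul_le_mul_of_nonneg_left (by linarith [hfC z hzmem, hf0 y hy]) (by positivity)
      have e3 : (d/(r*ε+d)) * C ≤ (d/(r*ε)) * C :=
        mul_le_mul_of_nonneg_right
          (div_le_div_of_nonneg_left hdpos.le hδ0 (by linarith)) hC.le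
      have key1 : f x - f y ≤ (d/(r*ε)) * C := by linarith
      have e1' : f y - f x ≤ (d/(r*ε)) * (f w - f x) := by
        have hring : (1 - d/(r*ε)) * f x + (d/(r*ε)) * f w - f x
            = (d/(r*ε)) * (f w - f x) := by ring
        linarith
      have e2' : (d/(r*ε)) * (f w - f x) ≤ (d/(r*ε)) * C :=
        mul_le_mul_of_nonneg_left (by linarith [hfC w hwmem, hf0 x hxK]) (by positivity)
      have key2 : f y - f x ≤ (d/(r*ε)) * C := by linarith
      have habs : |f x - f y| ≤ (d/(r*ε)) * C := abs_sub_le_iff.mpr ⟨key1, key2⟩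
      calc |f x - f y| ≤ (d/(r*ε)) * C := habs
        _ = C / (r*ε) * d := by ring
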